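/- arXiv:math/0606559 — 4 statements merged into one kernel-verified Lean document; each statement's English description precedes it below -/
import Mathlib

section
/- Let G be a discrete group acting continuously on a Hausdorff space X. Then the action is proper (i.e., the map G × X → X × X, (g,x) ↦ (gx, x) is proper) if and only if for every pair of points a, b ∈ X there exist open neighborhoods V_a of a and V_b of b such that the set {g ∈ G | gV_a ∩ V_b ≠ ∅} is finite. -/
open Set Filter Topology

/-- Let `G` be a discrete group acting continuously on a Hausdorff space `X`.
The action is proper (the map `G × X → X × X`, `(g,x) ↦ (g • x, x)` is a proper map) iff
every pair of points `a b : X` has open neighborhoods `Vа`, `Vb` such that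
`{g : G | g • Va ∩ Vb ≠ ∅}` is finite. -/
theorem stmt0 {G X : Type*} [Group G] [TopologicalSpace G] [DiscreteTopology G]
    [TopologicalSpace X] [T2Space X] [MulAction G X] [ContinuousSMul G X] :
    IsProperMap (fun p : G × X => (p.1 • p.2, p.2)) ↔
      ∀ a b : X, ∃ Va Vb : Set X, IsOpen Va ∧ IsOpen Vb ∧ a ∈ Va ∧ b ∈ Vb ∧
        {g : G | ((g • ·) '' Va) ∩ Vb ≠ ∅}.Finite := by
  have hcont : Continuous (fun p : G × X => (p.1 • p.2, p.2)) :=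
    (continuous_fst.smul continuous_snd).prodMk continuous_snd
  constructor
  · intro hf a b
    -- the fiber over (b, a) is compact, hence its first projection is finite
    have hFib : IsCompact ((fun p : G × X => (p.1 • p.2, p.2)) ⁻¹' {(b, a)}) :=
      hf.isCompact_preimage isCompact_singleton
    set S0 : Set G := Prod.fst '' ((fun p : G × X => (p.1 • p.2, p.2)) ⁻¹' {(b, a)}) with hS0def
    have hS0 : S0.Finite := (hFib.image continuous_fst).finite_of_discrete
    -- the image of (S0ᶜ ×ˢ univ) under f is closed and misses (b, a)
    have hCclosed : IsClosed ((S0ᶜ : Set G) ×ˢ (Set.univ : Set X)) :=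
      (isClosed_discrete _).prod isClosed_univ
    have himg : IsClosed ((fun p : G × X => (p.1 • p.2, p.2)) ''
        ((S0ᶜ : Set G) ×ˢ (Set.univ : Set X))) := hf.isClosedMap _ hCclosed
    have hnotmem : (b, a) ∉ (fun p : G × X => (p.1 • p.2, p.2)) ''
        ((S0ᶜ : Set G) ×ˢ (Set.univ : Set X)) := by
      rintro ⟨⟨g, x⟩, ⟨hg, -⟩, heq⟩
      exact hg ⟨(g, x), by simpa using heq, rfl⟩
    have hU : IsOpen ((fun p : G × X => (p.1 • p.2, p.2)) ''
        ((S0ᶜ : Set G) ×ˢ (Set.univ : Set X)))ᶜ := himg.isOpen_compl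
    obtain ⟨Vb, Va, hVb, hVa, hb, ha, hsub⟩ := isOpen_prod_iff.mp hU b a hnotmem
    refine ⟨Va, Vb, hVa, hVb, ha, hb, hS0.subset ?_⟩
    intro g hg
    rw [Set.mem_setOf_eq, ← Set.nonempty_iff_ne_empty] at hg
    obtain ⟨y, ⟨x, hxVa, rfl⟩, hyVb⟩ := hg
    by_contra hgS0
    exact hsub (Set.mk_mem_prod hyVb hxVa) ⟨(g, x), ⟨hgS0, trivial⟩, rfl⟩
  · intro h
    rw [isProperMap_iff_ultrafilter]
    refine ⟨hcont, fun 𝒰 y hy => ?_⟩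
    obtain ⟨Va, Vb, hVa, hVb, ha, hb, hfin⟩ := h y.2 y.1
    -- the preimage of Vb ×ˢ Va is in 𝒰 and its first projection lies in the finite set
    have hmem : (fun p : G × X => (p.1 • p.2, p.2)) ⁻¹' (Vb ×ˢ Va) ∈ 𝒰 :=
      hy (prod_mem_nhds (hVb.mem_nhds hb) (hVa.mem_nhds ha))
    have hsub : (fun p : G × X => (p.1 • p.2, p.2)) ⁻¹' (Vb ×ˢ Va) ⊆
        Prod.fst ⁻¹' {g : G | ((g • ·) '' Va) ∩ Vb ≠ ∅} := by
      rintro ⟨g, x⟩ ⟨h1, h2⟩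
      exact Set.nonempty_iff_ne_empty.mp ⟨g • x, ⟨x, h2, rfl⟩, h1⟩
    have hSmem : {g : G | ((g • ·) '' Va) ∩ Vb ≠ ∅} ∈ 𝒰.map Prod.fst :=
      by
      rw [Ultrafilter.mem_map]
      exact Filter.mem_of_superset hmem hsub
    obtain ⟨g, hgS, hgpure⟩ := Ultrafilter.eq_pure_of_finite_mem hfin hSmem
    have hfst : Filter.Tendsto Prod.fst (𝒰 : Filter (G × X)) (pure g) := le_of_eq
      (congrArg Ultrafilter.toFilter hgpure)
    have hsnd : Filter.Tendsto Prod.snd (𝒰 : Filter (G × X)) (𝓝 y.2) := by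
      have : Filter.Tendsto (Prod.snd ∘ fun p : G × X => (p.1 • p.2, p.2)) 𝒰 (𝓝 y.2) :=
        (continuous_snd.tendsto y).comp hy
      exact this
    have hle : (𝒰 : Filter (G × X)) ≤ 𝓝 (g, y.2) := by
      rw [nhds_prod_eq, Filter.le_prod]
      exact ⟨hfst.mono_right (pure_le_nhds g), hsnd⟩
    have hlim : Filter.Tendsto (fun p : G × X => (p.1 • p.2, p.2)) 𝒰 (𝓝 (g • y.2, y.2)) :=
      (hcont.tendsto (g, y.2)).mono_left hle
    have : (g • y.2, y.2) = y := tendsto_nhds_unique hlim hy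
    exact ⟨(g, y.2), this, hle⟩
end

section
/- Let α : H → G be a group homomorphism between discrete groups, let S be a space with a proper H-action (on a Hausdorff space), and suppose ker(α) acts freely on S. Then the induced G-action on G ×_α S := (G × S)/(gα(h), s) ∼ (g, hs), given by g'·[g,s] = [g'g, s], is proper. Concretely: for all [g,x], [g',x'] ∈ G ×_α S there are open neighborhoods W, W' such that {g̃ ∈ G | g̃W ∩ W' ≠ ∅} is finite. -/
/-- The setoid on `G × S` whose quotient is the induced space `G ×_α S`: we identify
`(g * α h, s) ∼ (g, h • s)` for `h : H`. -/
def indSetoid {H G : Type*} [Group H] [Group G] (α : H →* G) (S : Type*) [MulAction H S] :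
    Setoid (G × S) where
  r p q := ∃ h : H, q.1 = p.1 * α h ∧ p.2 = h • q.2
  iseqv := by
    refine ⟨fun p => ⟨1, by simp⟩, ?_, ?_⟩
    · rintro p q ⟨h, h1, h2⟩
      exact ⟨h⁻¹, by rw [h1, map_inv, mul_inv_cancel_right], by rw [h2, inv_smul_smul]⟩
    · rintro p q r ⟨h, h1, h2⟩ ⟨h', h1', h2'⟩
      exact ⟨h * h', by rw [h1', h1, map_mul, mul_assoc], by rw [h2, h2', mul_smul]⟩

/-- `G ×_α S`, the induction of the `H`-set `S` along `α : H → G`. -/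
def Ind {H G : Type*} [Group H] [Group G] (α : H →* G) (S : Type*) [MulAction H S] : Type _ :=
  Quotient (indSetoid α S)

/-- The class `[g, s]` of `(g, s)` in `G ×_α S`. -/
def indMk {H G : Type*} [Group H] [Group G] (α : H →* G) {S : Type*} [MulAction H S]
    (p : G × S) : Ind α S :=
  Quotient.mk (indSetoid α S) p

/-- The `G`-action on `G ×_α S`, `g' • [g, s] = [g' * g, s]`. -/
instance indMulAction {H G : Type*} [Group H] [Group G] (α : H →* G) (S : Type*)
    [MulAction H S] : MulAction G (Ind α S) where
  smul g' := Quotient.map (fun p => (g' * p.1, p.2))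
    (by rintro p q ⟨h, h1, h2⟩; exact ⟨h, by simp only []; rw [h1, mul_assoc], h2⟩)
  one_smul := by
    rintro ⟨p⟩
    show Quotient.map _ _ (Quotient.mk (indSetoid α S) p) = Quotient.mk (indSetoid α S) p
    rw [Quotient.map_mk]
    simp
  mul_smul := by
    rintro g₁ g₂ ⟨p⟩
    show Quotient.map _ _ (Quotient.mk (indSetoid α S) p) =
      Quotient.map _ _ (Quotient.map _ _ (Quotient.mk (indSetoid α S) p))
    rw [Quotient.map_mk, Quotient.map_mk, Quotient.map_mk]
    simp [mul_assoc]

theorem indSmul_mk {H G : Type*} [Group H] [Group G] (α : H →* G) {S : Type*} [MulAction H S]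
    (g' : G) (p : G × S) : g' • indMk α p = indMk α (g' * p.1, p.2) := rfl

/-- The quotient topology on `G ×_α S`. -/
instance indTopologicalSpace {H G : Type*} [Group H] [Group G] (α : H →* G) (S : Type*)
    [MulAction H S] [TopologicalSpace G] [TopologicalSpace S] : TopologicalSpace (Ind α S) :=
  inferInstanceAs (TopologicalSpace (Quotient (indSetoid α S)))


lemma indMk_slice_open {H G : Type*} [Group H] [Group G]
    [TopologicalSpace G] [DiscreteTopology G] (α : H →* G) {S : Type*}
    [TopologicalSpace S] [MulAction H S]
    (hcont : ∀ h : H, Continuous fun s : S => h • s)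
    (g : G) {V : Set S} (hV : IsOpen V) : IsOpen (indMk α '' ({g} ×ˢ V)) := by
  have key : Quotient.mk (indSetoid α S) ⁻¹' (indMk α '' ({g} ×ˢ V)) =
      ⋃ h : H, {g * (α h)⁻¹} ×ˢ ((h • ·) '' V) := by
    ext ⟨a, s⟩
    simp only [Set.mem_preimage, Set.mem_image, Set.mem_iUnion, Set.mem_prod,
      Set.mem_singleton_iff, Prod.exists]
    constructor
    · rintro ⟨⟨b, v⟩, ⟨hb, hv⟩, heq⟩
      obtain ⟨h, h1, h2⟩ := Quotient.exact heq.symm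
      have h1' : b = a * α h := h1
      have h2' : s = h • v := h2
      exact ⟨h, by rw [← hb, h1', mul_inv_cancel_right], v, hv, h2'.symm⟩
    · rintro ⟨h, ha, v, hv, hs⟩
      exact ⟨(g, v), ⟨rfl, hv⟩, Quotient.sound
        ⟨h⁻¹, by rw [map_inv, ha], by rw [← hs, inv_smul_smul]⟩⟩
  have : IsOpen (Quotient.mk (indSetoid α S) ⁻¹' (indMk α '' ({g} ×ˢ V))) := by
    rw [key]
    refine isOpen_iUnion fun h => IsOpen.prod (isOpen_discrete _) ?_
    have : (fun s : S => h • s) '' V = (fun s : S => h⁻¹ • s) ⁻¹' V := by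
      ext s
      simp only [Set.mem_image, Set.mem_preimage]
      constructor
      · rintro ⟨v, hv, rfl⟩; simpa using hv
      · intro hs; exact ⟨h⁻¹ • s, hs, by simp⟩
    rw [this]
    exact hV.preimage (hcont h⁻¹)
  exact this

/-- Let `α : H → G` be a homomorphism of discrete groups, let `S` be a
Hausdorff space with a proper `H`-action (properness in the form: every pair of points has
open neighborhoods `V, V'` with `{h | hV ∩ V' ≠ ∅}` finite), and suppose `ker α` acts freely
on `S`.  Then the induced `G`-action on `G ×_α S` (with the quotient topology), given by
`g' • [g, s] = [g' g, s]`, is proper: every pair of points of `G ×_α S` has open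
neighborhoods `W, W'` such that `{g̃ : G | g̃ W ∩ W' ≠ ∅}` is finite. -/
theorem stmt7 {H G : Type*} [Group H] [Group G]
    [TopologicalSpace H] [DiscreteTopology H] [TopologicalSpace G] [DiscreteTopology G]
    (α : H →* G) {S : Type*} [TopologicalSpace S] [T2Space S] [MulAction H S]
    (hcont : ∀ h : H, Continuous fun s : S => h • s)
    (hproper : ∀ x x' : S, ∃ V V' : Set S, IsOpen V ∧ IsOpen V' ∧ x ∈ V ∧ x' ∈ V' ∧
      {h : H | ((h • ·) '' V) ∩ V' ≠ ∅}.Finite)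
    (hkerfree : ∀ (h : H) (s : S), α h = 1 → h • s = s → h = 1) :
    ∀ z z' : Ind α S, ∃ W W' : Set (Ind α S), IsOpen W ∧ IsOpen W' ∧ z ∈ W ∧ z' ∈ W' ∧
      {g' : G | ((g' • ·) '' W) ∩ W' ≠ ∅}.Finite := by
  intro z z'
  obtain ⟨⟨g, x⟩, rfl⟩ := Quotient.exists_rep z
  obtain ⟨⟨g', x'⟩, rfl⟩ := Quotient.exists_rep z'
  obtain ⟨V, V', hV, hV', hx'V, hxV', hfin⟩ := hproper x' x
  refine ⟨indMk α '' ({g} ×ˢ V'), indMk α '' ({g'} ×ˢ V),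
    indMk_slice_open α hcont g hV', indMk_slice_open α hcont g' hV,
    ⟨(g, x), ⟨rfl, hxV'⟩, rfl⟩, ⟨(g', x'), ⟨rfl, hx'V⟩, rfl⟩, ?_⟩
  refine (hfin.image fun h => g' * (α h)⁻¹ * g⁻¹).subset ?_
  rintro g₀ hg₀
  obtain ⟨w, hw1, hw2⟩ := Set.nonempty_iff_ne_empty.mpr hg₀
  obtain ⟨zz, hzz, rfl⟩ := hw1
  obtain ⟨⟨a, v⟩, ⟨rfl, hv⟩, rfl⟩ := hzz
  obtain ⟨⟨b, v'⟩, ⟨rfl, hv'⟩, heq⟩ := hw2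
  have heq' : indMk α (b, v') = indMk α (g₀ * a, v) := heq
  obtain ⟨h, h1, h2⟩ := Quotient.exact heq' 
  have h1' : g₀ * a = b * α h := h1
  have h2' : v' = h • v := h2
  refine ⟨h⁻¹, Set.nonempty_iff_ne_empty.mp
    ⟨v, ⟨v', hv', by rw [h2']; exact inv_smul_smul h v⟩, hv⟩, ?_⟩
  show b * (α h⁻¹)⁻¹ * a⁻¹ = g₀
  rw [map_inv, inv_inv, ← h1', mul_inv_cancel_right]
end

section
/- Let α : H → G be a group homomorphism, let S be an H-set with x, x' ∈ S, let H̃ ⊆ H, and g, g' ∈ G. In G ×_α S with the quotient relation (gα(h),s) ∼ (g,hs), if V_x, V_{x'} ⊆ S satisfy {h ∈ H | hV_x ∩ V_{x'} ≠ ∅} = H̃, and W_x, W_{x'} denote the images of g × V_x and g' × V_{x'} in G ×_α S, then {g̃ ∈ G | g̃W_x ∩ W_{x'} ≠ ∅} = g' α(H̃) g⁻¹. -/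
/-- Let `α : H → G` be a group homomorphism, `S` an `H`-set, `x, x' ∈ S`,
`g, g' ∈ G`, and let `V_x, V_{x'} ⊆ S` satisfy `{h : H | h V_x ∩ V_{x'} ≠ ∅} = H̃`.
If `W_x` and `W_{x'}` are the images of `{g} × V_x` and `{g'} × V_{x'}` in `G ×_α S`,
then `{g̃ : G | g̃ W_x ∩ W_{x'} ≠ ∅} = g' α(H̃) g⁻¹`. -/
theorem stmt8 {H G : Type*} [Group H] [Group G] (α : H →* G) {S : Type*} [MulAction H S]
    (Vx Vx' : Set S) (Ht : Set H)
    (hV : {h : H | ((h • ·) '' Vx) ∩ Vx' ≠ ∅} = Ht)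
    (g g' : G) (Wx Wx' : Set (Ind α S))
    (hWx : Wx = indMk α '' ({g} ×ˢ Vx)) (hWx' : Wx' = indMk α '' ({g'} ×ˢ Vx')) :
    {gtil : G | ((gtil • ·) '' Wx) ∩ Wx' ≠ ∅} = (fun h : H => g' * α h * g⁻¹) '' Ht := by
  have hmk : ∀ p q : G × S, indMk α p = indMk α q ↔ ∃ h : H, q.1 = p.1 * α h ∧ p.2 = h • q.2 := by
    intro p q
    exact Quotient.eq (r := indSetoid α S)
  have hHt : ∀ h : H, h ∈ Ht ↔ ∃ v ∈ Vx, h • v ∈ Vx' := by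
    intro h
    rw [← hV]
    simp only [Set.mem_setOf_eq, ← Set.nonempty_iff_ne_empty, Set.Nonempty,
      Set.mem_inter_iff, Set.mem_image]
    constructor
    · rintro ⟨s, ⟨v, hv, rfl⟩, hs⟩; exact ⟨v, hv, hs⟩
    · rintro ⟨v, hv, hs⟩; exact ⟨h • v, ⟨v, hv, rfl⟩, hs⟩
  ext gtil
  simp only [Set.mem_setOf_eq, ← Set.nonempty_iff_ne_empty, Set.Nonempty, Set.mem_inter_iff,
    Set.mem_image, hWx, hWx']
  constructor
  · rintro ⟨w, ⟨_, ⟨⟨gg, v⟩, ⟨hg1, hv⟩, rfl⟩, rfl⟩, ⟨g2, v'⟩, ⟨hg2, hv'⟩, hw⟩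
    simp only [Set.mem_singleton_iff] at hg1 hg2
    subst hg1; subst hg2
    rw [indSmul_mk] at hw
    obtain ⟨h, h1, h2⟩ := (hmk _ _).1 hw
    simp only at h1 h2
    refine ⟨h, (hHt _).2 ⟨v, hv, h2 ▸ hv'⟩, ?_⟩
    rw [← h1]
    group
  · rintro ⟨h, hh, rfl⟩
    obtain ⟨v, hv, hv'⟩ := (hHt h).1 hh
    refine ⟨indMk α (g', h • v), ⟨indMk α (g, v), ⟨(g, v), ⟨rfl, hv⟩, rfl⟩, ?_⟩,
      ⟨(g', h • v), ⟨rfl, hv'⟩, rfl⟩⟩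
    rw [indSmul_mk]
    exact (hmk _ _).2 ⟨h⁻¹, by simp [map_inv], by simp⟩
end

section
/- Let α : H → G be a group homomorphism, X an H-set, S' a G-set, and f' : S' → G ×_α X a G-equivariant map. Let W := f'⁻¹(α(H) ×_α X) and W̃ := {(w,x) ∈ W × X | f'(w) = [1,x]}. Then the map G ×_α W̃ → S', [g,(w,x)] ↦ g·w, is a well-defined G-equivariant bijection with inverse φ : S' → G ×_α W̃ given by φ(s') = [g, (g⁻¹s', x)] whenever f'(s') = [g,x]. -/
/-- For `T` a set of pairs in `S' × X`, where `G` acts on `S'` and `H` acts on `X`, the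
setoid on `G × T` presenting `G ×_α T` for the `H`-action `h • (w, x) = (α h • w, h • x)`. -/
def twSetoid {H G : Type*} [Group H] [Group G] (α : H →* G) {S' X : Type*} [MulAction G S']
    [MulAction H X] (T : Set (S' × X)) : Setoid (G × ↥T) where
  r p q := ∃ h : H, q.1 = p.1 * α h ∧
    (p.2 : S' × X) = (α h • (q.2 : S' × X).1, h • (q.2 : S' × X).2)
  iseqv := by
    refine ⟨fun p => ⟨1, by simp⟩, ?_, ?_⟩
    · rintro p q ⟨h, h1, h2⟩
      refine ⟨h⁻¹, by rw [h1, map_inv, mul_inv_cancel_right], ?_⟩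
      rw [h2]
      simp
    · rintro p q r ⟨h, h1, h2⟩ ⟨h', h1', h2'⟩
      refine ⟨h * h', by rw [h1', h1, map_mul, mul_assoc], ?_⟩
      rw [h2, h2']
      simp [mul_smul]

/-- Let `α : H → G` be a group homomorphism with `ker α` acting freely on
the `H`-set `X`, let `S'` be a `G`-set and `f' : S' → G ×_α X` a `G`-equivariant map.  Let
`W = f'⁻¹(α(H) ×_α X)` and `W̃ = {(w, x) ∈ W × X | f'(w) = [1, x]}`, with `H` acting on `W̃`
by `h • (w, x) = (α h • w, h • x)`.  Then the map `G ×_α W̃ → S'`, `[g, (w, x)] ↦ g • w`, is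
a well-defined `G`-equivariant bijection, whose inverse `φ` satisfies
`φ(s') = [g, (g⁻¹ • s', x)]` whenever `f'(s') = [g, x]`. -/
theorem stmt13 {H G : Type*} [Group H] [Group G] (α : H →* G) {X S' : Type*}
    [MulAction H X] [MulAction G S']
    (hkerfree : ∀ (h : H) (x : X), α h = 1 → h • x = x → h = 1)
    (f' : S' → Ind α X) (hf' : ∀ (g : G) (s' : S'), f' (g • s') = g • f' s')
    (W : Set S')
    (hW : W = {s' | ∃ (g : G) (x : X), g ∈ α.range ∧ f' s' = indMk α (g, x)})
    (Wt : Set (S' × X))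
    (hWt : Wt = {p | p.1 ∈ W ∧ f' p.1 = indMk α ((1 : G), p.2)}) :
    ∃ e : Quotient (twSetoid α Wt) ≃ S',
      (∀ (g : G) (p : ↥Wt),
        e (Quotient.mk (twSetoid α Wt) (g, p)) = g • (p : S' × X).1) ∧
      (∀ (g₀ g : G) (p : ↥Wt),
        e (Quotient.mk (twSetoid α Wt) (g₀ * g, p)) =
          g₀ • e (Quotient.mk (twSetoid α Wt) (g, p))) ∧
      (∀ (s' : S') (g : G) (x : X), f' s' = indMk α (g, x) →
        ∃ p : ↥Wt, (p : S' × X) = (g⁻¹ • s', x) ∧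
          e.symm s' = Quotient.mk (twSetoid α Wt) (g, p)) := by
  -- key fact about members of Wt
  have key : ∀ p : ↥Wt, f' (p : S' × X).1 = indMk α (1, (p : S' × X).2) := by
    intro p
    exact (hWt.subset p.2).2
  have memWt : ∀ (s' : S') (g : G) (x : X), f' s' = indMk α (g, x) →
      (g⁻¹ • s', x) ∈ Wt := by
    intro s' g x hfx
    have h1 : f' (g⁻¹ • s') = indMk α (1, x) := by
      rw [hf', hfx, indSmul_mk, inv_mul_cancel]
    rw [hWt]
    refine ⟨?_, h1⟩
    rw [hW]
    exact ⟨1, x, one_mem _, h1⟩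
  have wd : ∀ p q : G × ↥Wt, (twSetoid α Wt).r p q →
      p.1 • (p.2 : S' × X).1 = q.1 • (q.2 : S' × X).1 := by
    rintro p q ⟨h, h1, h2⟩
    have hfst : (p.2 : S' × X).1 = α h • (q.2 : S' × X).1 := congrArg Prod.fst h2
    rw [hfst, h1, mul_smul]
  let F : Quotient (twSetoid α Wt) → S' :=
    Quotient.lift (fun p : G × ↥Wt => p.1 • (p.2 : S' × X).1) wd
  have hFmk : ∀ p : G × ↥Wt, F (Quotient.mk (twSetoid α Wt) p) = p.1 • (p.2 : S' × X).1 :=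
    fun _ => rfl
  have hinj : Function.Injective F := by
    rintro ⟨p⟩ ⟨q⟩ hFeq
    have hFeq' : p.1 • (p.2 : S' × X).1 = q.1 • (q.2 : S' × X).1 := hFeq
    have e1 : f' (p.1 • (p.2 : S' × X).1) = indMk α (p.1, (p.2 : S' × X).2) := by
      rw [hf', key p.2, indSmul_mk, mul_one]
    have e2 : f' (q.1 • (q.2 : S' × X).1) = indMk α (q.1, (q.2 : S' × X).2) := by
      rw [hf', key q.2, indSmul_mk, mul_one]
    have hf : indMk α (p.1, (p.2 : S' × X).2) = indMk α (q.1, (q.2 : S' × X).2) := by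
      rw [← e1, ← e2, hFeq']
    obtain ⟨h, h1, h2⟩ := Quotient.exact hf
    apply Quotient.sound
    refine ⟨h, h1, ?_⟩
    have hw : (p.2 : S' × X).1 = α h • (q.2 : S' × X).1 := by
      have : p.1 • (p.2 : S' × X).1 = p.1 • (α h • (q.2 : S' × X).1) := by
        rw [← mul_smul, ← h1, hFeq']
      exact smul_left_cancel p.1 this
    exact Prod.ext hw h2
  have hsurj : Function.Surjective F := by
    intro s'
    have hq : f' s' = indMk α (Quotient.out (f' s')) := (Quotient.out_eq (f' s')).symm
    set q := Quotient.out (f' s')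
    refine ⟨Quotient.mk _ (q.1, ⟨(q.1⁻¹ • s', q.2), memWt s' q.1 q.2 hq⟩), ?_⟩
    rw [hFmk]
    exact smul_inv_smul q.1 s'
  refine ⟨Equiv.ofBijective F ⟨hinj, hsurj⟩, fun g p => rfl, fun g₀ g p => ?_, ?_⟩
  · show (g₀ * g) • (p : S' × X).1 = g₀ • (g • (p : S' × X).1)
    rw [mul_smul]
  · intro s' g x hfx
    refine ⟨⟨(g⁻¹ • s', x), memWt s' g x hfx⟩, rfl, ?_⟩
    rw [Equiv.symm_apply_eq]
    exact (smul_inv_smul g s').symm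
end
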